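/- Let f be a bent Boolean function on F_2^{2m} such that f is extended affine equivalent to its dual f̂. Let g be a bent Boolean function that is extended translation equivalent to f (i.e. g(x) = f(x+b) + ⟨c,x⟩ + δ for some b, c ∈ F_2^{2m}, δ ∈ F_2). Then the dual ĝ of g is extended affine equivalent to g. -/

import Mathlib

open Finset

/-- Inner product on `F_2^n`. -/
def dotp {n : ℕ} (x y : Fin n → ZMod 2) : ZMod 2 := ∑ i, x i * y i

/-- Hamming weight of a Boolean function: the cardinality of its support. -/
def wt {n : ℕ} (f : (Fin n → ZMod 2) → ZMod 2) : ℕ :=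
  (Finset.univ.filter fun x => f x = 1).card

/-- Walsh–Hadamard transform of a Boolean function. -/
def walsh {n : ℕ} (f : (Fin n → ZMod 2) → ZMod 2) (x : Fin n → ZMod 2) : ℤ :=
  ∑ y : Fin n → ZMod 2, (-1 : ℤ) ^ (f y + dotp x y).val

/-- A Boolean function on `F_2^(2m)` is bent if its Walsh–Hadamard transform has constant
absolute value `2^m`. -/
def IsBent {m : ℕ} (f : (Fin (2 * m) → ZMod 2) → ZMod 2) : Prop :=
  ∀ x, |walsh f x| = 2 ^ m

/-- The dual of a bent function: `f̂ x = 0` if `W_f x = 2^m`, and `1` otherwise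
(for bent `f` the other case is exactly `W_f x = -2^m`). -/
def dual {m : ℕ} (f : (Fin (2 * m) → ZMod 2) → ZMod 2) :
    (Fin (2 * m) → ZMod 2) → ZMod 2 :=
  fun x => if walsh f x = 2 ^ m then 0 else 1

/-- The weight class of a bent function on `F_2^(2m)`:
`0` if its weight is `2^(2m-1) - 2^(m-1)`, and `1` otherwise. -/
def wc {m : ℕ} (f : (Fin (2 * m) → ZMod 2) → ZMod 2) : ZMod 2 :=
  if wt f = 2 ^ (2 * m - 1) - 2 ^ (m - 1) then 0 else 1

/-- The Cayley graph of a Boolean function: distinct `x`, `y` are adjacent iff `f (x+y) = 1`. -/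
def cayley {n : ℕ} (f : (Fin n → ZMod 2) → ZMod 2) : SimpleGraph (Fin n → ZMod 2) where
  Adj x y := x ≠ y ∧ f (x + y) = 1
  symm := ⟨fun x y h => ⟨h.1.symm, by rw [add_comm]; exact h.2⟩⟩
  loopless := ⟨fun x h => h.1 rfl⟩

instance cayleyAdjDecidable {n : ℕ} (f : (Fin n → ZMod 2) → ZMod 2) :
    DecidableRel (cayley f).Adj :=
  fun x y => inferInstanceAs (Decidable (x ≠ y ∧ f (x + y) = 1))

/-- Extended affine equivalence of Boolean functions. -/
def EAEquiv {n : ℕ} (f g : (Fin n → ZMod 2) → ZMod 2) : Prop :=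
  ∃ (A : (Fin n → ZMod 2) ≃ₗ[ZMod 2] (Fin n → ZMod 2)) (b c : Fin n → ZMod 2) (δ : ZMod 2),
    ∀ x, g x = f (A x + b) + dotp c x + δ

lemma dotp_add_left {n : ℕ} (x y z : Fin n → ZMod 2) :
    dotp (x + y) z = dotp x z + dotp y z := by
  simp [dotp, add_mul, Finset.sum_add_distrib]

lemma dotp_add_right {n : ℕ} (x y z : Fin n → ZMod 2) :
    dotp x (y + z) = dotp x y + dotp x z := by
  simp [dotp, mul_add, Finset.sum_add_distrib]

lemma dotp_comm {n : ℕ} (x y : Fin n → ZMod 2) : dotp x y = dotp y x := by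
  simp [dotp, mul_comm]

lemma neg_one_pow_add (a b : ZMod 2) :
    (-1 : ℤ) ^ (a + b).val = (-1 : ℤ) ^ a.val * (-1 : ℤ) ^ b.val := by
  revert a b; decide

lemma zmod2_cases (a : ZMod 2) : a = 0 ∨ a = 1 := by revert a; decide

/-- `dotp c` as a linear map. -/
def dotpL {n : ℕ} (c : Fin n → ZMod 2) : (Fin n → ZMod 2) →ₗ[ZMod 2] ZMod 2 where
  toFun x := dotp c x
  map_add' x y := dotp_add_right c x y
  map_smul' r x := by simp [dotp, Finset.mul_sum, mul_left_comm]

@[simp] lemma dotpL_apply {n : ℕ} (c x : Fin n → ZMod 2) : dotpL c x = dotp c x := rfl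

lemma exists_dotp_repr {n : ℕ} (L : (Fin n → ZMod 2) →ₗ[ZMod 2] ZMod 2) :
    ∃ v, ∀ x, L x = dotp v x := by
  refine ⟨fun i => L fun j => if i = j then 1 else 0, fun x => ?_⟩
  conv_lhs => rw [pi_eq_sum_univ x]
  rw [map_sum]
  simp [dotp, map_smul, mul_comm]

lemma add_self_vec {n : ℕ} (z b : Fin n → ZMod 2) : z + b + b = z := by
  funext i
  show z i + b i + b i = z i
  rw [add_assoc, CharTwo.add_self_eq_zero, add_zero]

lemma walsh_ET {m : ℕ} (f g : (Fin (2 * m) → ZMod 2) → ZMod 2)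
    (b c : Fin (2 * m) → ZMod 2) (δ : ZMod 2)
    (hET : ∀ x, g x = f (x + b) + dotp c x + δ) (x : Fin (2 * m) → ZMod 2) :
    walsh g x = (-1 : ℤ) ^ (dotp (x + c) b + δ).val * walsh f (x + c) := by
  rw [walsh, walsh, Finset.mul_sum,
    ← Equiv.sum_comp (Equiv.addRight b)
      (fun y => (-1 : ℤ) ^ (g y + dotp x y).val)]
  refine Finset.sum_congr rfl fun z _ => ?_
  have hz : g (Equiv.addRight b z) + dotp x (Equiv.addRight b z)
      = (dotp (x + c) b + δ) + (f z + dotp (x + c) z) := by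
    show g (z + b) + dotp x (z + b) = _
    rw [hET (z + b), add_self_vec, dotp_add_right x z b, dotp_add_right c z b, dotp_add_left, dotp_add_left]
    ring
  rw [hz, neg_one_pow_add]

lemma dual_ET {m : ℕ} (f g : (Fin (2 * m) → ZMod 2) → ZMod 2)
    (hf : IsBent f) (b c : Fin (2 * m) → ZMod 2) (δ : ZMod 2)
    (hET : ∀ x, g x = f (x + b) + dotp c x + δ) (x : Fin (2 * m) → ZMod 2) :
    dual g x = dual f (x + c) + (dotp (x + c) b + δ) := by
  have hw := walsh_ET f g b c δ hET x
  have habs := hf (x + c)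
  have hpos : (0 : ℤ) < 2 ^ m := by positivity
  have hcase : walsh f (x + c) = 2 ^ m ∨ walsh f (x + c) = -(2 ^ m) :=
    (abs_eq hpos.le).mp habs
  rcases zmod2_cases (dotp (x + c) b + δ) with he | he <;> rw [he] at hw ⊢
  · simp only [ZMod.val_zero, pow_zero, one_mul] at hw
    rw [dual, dual, hw, add_zero]
  · simp only [ZMod.val_one, pow_one, neg_one_mul] at hw
    have hne : -(2 : ℤ) ^ m ≠ 2 ^ m := by intro h; linarith
    rcases hcase with h | h
    · rw [dual, dual, hw, h, if_neg hne, if_pos rfl]; decide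
    · rw [dual, dual, hw, h, neg_neg, if_pos rfl, if_neg hne]; decide

/-- if a bent function `f` is EA equivalent to its dual, then any bent
function `g` extended translation equivalent to `f` is EA equivalent to its dual. -/
theorem dual_EA_of_ET {m : ℕ} (f g : (Fin (2 * m) → ZMod 2) → ZMod 2)
    (hf : IsBent f) (hfd : EAEquiv f (dual f)) (hg : IsBent g)
    (b c : Fin (2 * m) → ZMod 2) (δ : ZMod 2)
    (hET : ∀ x, g x = f (x + b) + dotp c x + δ) :
    EAEquiv g (dual g) := by
  obtain ⟨A, b', c', δ', hA⟩ := hfd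
  obtain ⟨v, hv⟩ := exists_dotp_repr
    (dotpL c ∘ₗ A.toLinearMap + dotpL c' + dotpL b)
  have hv' : ∀ x, dotp c (A x) + dotp c' x + dotp b x = dotp v x := by
    intro x; have := hv x
    simpa using this
  have hfu : ∀ u, f u = g (u + b) + dotp c (u + b) + δ := by
    intro u
    have h1 := hET (u + b)
    rw [add_self_vec] at h1
    have h2 : (dotp c (u + b) : ZMod 2) + dotp c (u + b) = 0 :=
      CharTwo.add_self_eq_zero _
    have h3 : (δ : ZMod 2) + δ = 0 := CharTwo.add_self_eq_zero _
    linear_combination -h1 - h2 - h3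
  refine ⟨A, A c + b' + b, v,
    dotp c (A c + b' + b) + dotp c' c + δ' + dotp c b, fun x => ?_⟩
  rw [dual_ET f g hf b c δ hET x, hA (x + c)]
  have harg : A (x + c) + b' + b = A x + (A c + b' + b) := by
    rw [map_add]; abel
  rw [hfu (A (x + c) + b'), harg, dotp_add_right c (A x),
    dotp_add_right c', dotp_add_left x c b, dotp_comm x b]
  have h3 : (δ : ZMod 2) + δ = 0 := CharTwo.add_self_eq_zero _
  linear_combination hv' x + h3
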